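/- Let H be a Hopf algebra with bijective antipode and let H₄=H⊗H be the Yetter-Drinfel'd-Long bimodule with h▷(k⊗l)=h₁kS(h₂)⊗l, (k⊗l)◁h=k⊗S(h₁)lh₂, ρˡ(k⊗l)=k₁⊗(k₂⊗l), ρʳ(k⊗l)=(k⊗l₁)⊗l₂. Then the braiding ψ_{H₄,H₄} is a symmetry if and only if H is commutative. -/

import Mathlib

noncomputable section
open TensorProduct

namespace YDL

variable (K : Type) [Field K] (H : Type) [Ring H] [HopfAlgebra K H]

abbrev mu : H ⊗[K] H →ₗ[K] H := LinearMap.mul' K H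
abbrev cm : H →ₗ[K] H ⊗[K] H := Coalgebra.comul
abbrev cu : H →ₗ[K] K := Coalgebra.counit
abbrev sa : H →ₗ[K] H := HopfAlgebra.antipode (R := K)
abbrev eta : K →ₗ[K] H := Algebra.linearMap K H

/-- Yetter–Drinfel'd–Long bimodule over `H` (Definition 2.1). -/
structure IsYDLong (M : Type) [AddCommGroup M] [Module K M]
    (lact : H ⊗[K] M →ₗ[K] M) (ract : M ⊗[K] H →ₗ[K] M)
    (lcoact : M →ₗ[K] H ⊗[K] M) (rcoact : M →ₗ[K] M ⊗[K] H) : Prop where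
  lact_one : ∀ m : M, lact (1 ⊗ₜ m) = m
  lact_mul : ∀ (g h : H) (m : M), lact ((g * h) ⊗ₜ m) = lact (g ⊗ₜ lact (h ⊗ₜ m))
  ract_one : ∀ m : M, ract (m ⊗ₜ 1) = m
  ract_mul : ∀ (m : M) (g h : H), ract (m ⊗ₜ (g * h)) = ract (ract (m ⊗ₜ g) ⊗ₜ h)
  bimod : ∀ (h : H) (m : M) (g : H),
    ract (lact (h ⊗ₜ m) ⊗ₜ g) = lact (h ⊗ₜ ract (m ⊗ₜ g))
  lcoassoc : (TensorProduct.assoc K H H M).toLinearMap ∘ₗ (cm K H).rTensor M ∘ₗ lcoact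
      = lcoact.lTensor H ∘ₗ lcoact
  lcounit : (TensorProduct.lid K M).toLinearMap ∘ₗ (cu K H).rTensor M ∘ₗ lcoact
      = LinearMap.id
  rcoassoc : (TensorProduct.assoc K M H H).toLinearMap ∘ₗ rcoact.rTensor H ∘ₗ rcoact
      = (cm K H).lTensor M ∘ₗ rcoact
  rcounit : (TensorProduct.rid K M).toLinearMap ∘ₗ (cu K H).lTensor M ∘ₗ rcoact
      = LinearMap.id
  bicomod : rcoact.lTensor H ∘ₗ lcoact
      = (TensorProduct.assoc K H M H).toLinearMap ∘ₗ lcoact.rTensor H ∘ₗ rcoact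
  yd23 : (mu K H).rTensor M ∘ₗ (TensorProduct.comm K H H).toLinearMap.rTensor M
        ∘ₗ (TensorProduct.assoc K H H M).symm.toLinearMap ∘ₗ lcoact.lTensor H ∘ₗ lact.lTensor H
        ∘ₗ (TensorProduct.assoc K H H M).toLinearMap
        ∘ₗ (TensorProduct.comm K H H).toLinearMap.rTensor M ∘ₗ (cm K H).rTensor M
      = TensorProduct.map (mu K H) lact
        ∘ₗ (tensorTensorTensorComm K H H H M).toLinearMap
        ∘ₗ TensorProduct.map (cm K H) lcoact
  long24 : rcoact ∘ₗ lact
      = lact.rTensor H ∘ₗ (TensorProduct.assoc K H M H).symm.toLinearMap ∘ₗ rcoact.lTensor H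
  yd25 : (mu K H).lTensor M ∘ₗ (TensorProduct.comm K H H).toLinearMap.lTensor M
        ∘ₗ (TensorProduct.assoc K M H H).toLinearMap ∘ₗ rcoact.rTensor H ∘ₗ ract.rTensor H
        ∘ₗ (TensorProduct.assoc K M H H).symm.toLinearMap
        ∘ₗ (TensorProduct.comm K H H).toLinearMap.lTensor M ∘ₗ (cm K H).lTensor M
      = TensorProduct.map ract (mu K H)
        ∘ₗ (tensorTensorTensorComm K M H H H).toLinearMap
        ∘ₗ TensorProduct.map rcoact (cm K H)
  long26 : lcoact ∘ₗ ract
      = ract.lTensor H ∘ₗ (TensorProduct.assoc K H M H).toLinearMap ∘ₗ lcoact.rTensor H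

/-- The braiding `ψ_{M,N}(m ⊗ n) = m₍₋₁₎ ▷ n₍₀₎ ⊗ m₍₀₎ ◁ n₍₁₎`. -/
def braid {M N : Type} [AddCommGroup M] [Module K M] [AddCommGroup N] [Module K N]
    (lcoactM : M →ₗ[K] H ⊗[K] M) (ractM : M ⊗[K] H →ₗ[K] M)
    (lactN : H ⊗[K] N →ₗ[K] N) (rcoactN : N →ₗ[K] N ⊗[K] H) :
    M ⊗[K] N →ₗ[K] N ⊗[K] M :=
  TensorProduct.map lactN ractM ∘ₗ (tensorTensorTensorComm K H M N H).toLinearMap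
    ∘ₗ TensorProduct.map lcoactM rcoactN

/-- The inverse braiding `ψ⁻¹_{N,M}(n ⊗ m) = m₍₀₎ ◁ S⁻¹(n₍₁₎) ⊗ S⁻¹(m₍₋₁₎) ▷ n₍₀₎`,
where `Si` is the (given) inverse of the antipode. -/
def braidInv (Si : H →ₗ[K] H) {M N : Type}
    [AddCommGroup M] [Module K M] [AddCommGroup N] [Module K N]
    (lcoactM : M →ₗ[K] H ⊗[K] M) (ractM : M ⊗[K] H →ₗ[K] M)
    (lactN : H ⊗[K] N →ₗ[K] N) (rcoactN : N →ₗ[K] N ⊗[K] H) :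
    N ⊗[K] M →ₗ[K] M ⊗[K] N :=
  TensorProduct.map ractM lactN
    ∘ₗ (TensorProduct.comm K (H ⊗[K] N) (M ⊗[K] H)).toLinearMap
    ∘ₗ (tensorTensorTensorComm K H M N H).toLinearMap
    ∘ₗ (TensorProduct.comm K (N ⊗[K] H) (H ⊗[K] M)).toLinearMap
    ∘ₗ TensorProduct.map (Si.lTensor N ∘ₗ rcoactN) (Si.rTensor M ∘ₗ lcoactM)

/-! Structure maps of `H₁, H₂, H₃, H₄` from Example 2.4. -/

/-- `h ▷ (k ⊗ l) = hk ⊗ l`. -/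
def lactA : H ⊗[K] (H ⊗[K] H) →ₗ[K] H ⊗[K] H :=
  (mu K H).rTensor H ∘ₗ (TensorProduct.assoc K H H H).symm.toLinearMap

/-- `l ⊗ h ↦ S(h₁) l h₂`. -/
def adR : H ⊗[K] H →ₗ[K] H :=
  mu K H ∘ₗ (mu K H ∘ₗ (sa K H).rTensor H ∘ₗ (TensorProduct.comm K H H).toLinearMap).rTensor H
    ∘ₗ (TensorProduct.assoc K H H H).symm.toLinearMap ∘ₗ (cm K H).lTensor H

/-- `(k ⊗ l) ◁ h = k ⊗ S(h₁) l h₂`. -/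
def ractA : (H ⊗[K] H) ⊗[K] H →ₗ[K] H ⊗[K] H :=
  (adR K H).lTensor H ∘ₗ (TensorProduct.assoc K H H H).toLinearMap

/-- `k ↦ k₁ S(k₃) ⊗ k₂`. -/
def c1 : H →ₗ[K] H ⊗[K] H :=
  (mu K H).rTensor H ∘ₗ (TensorProduct.assoc K H H H).symm.toLinearMap
    ∘ₗ ((sa K H).rTensor H ∘ₗ (TensorProduct.comm K H H).toLinearMap).lTensor H
    ∘ₗ (cm K H).lTensor H ∘ₗ cm K H

/-- `ρˡ(k ⊗ l) = k₁ S(k₃) ⊗ (k₂ ⊗ l)`. -/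
def lcoactA : H ⊗[K] H →ₗ[K] H ⊗[K] (H ⊗[K] H) :=
  (TensorProduct.assoc K H H H).toLinearMap ∘ₗ (c1 K H).rTensor H

/-- `ρʳ(k ⊗ l) = (k ⊗ l₁) ⊗ l₂`. -/
def rcoactA : H ⊗[K] H →ₗ[K] (H ⊗[K] H) ⊗[K] H :=
  (TensorProduct.assoc K H H H).symm.toLinearMap ∘ₗ (cm K H).lTensor H

/-- `h ⊗ x ↦ h₁ x S(h₂)`. -/
def ad : H ⊗[K] H →ₗ[K] H :=
  mu K H ∘ₗ (mu K H ∘ₗ (sa K H).lTensor H ∘ₗ (TensorProduct.comm K H H).toLinearMap).lTensor H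
    ∘ₗ (TensorProduct.assoc K H H H).toLinearMap ∘ₗ (cm K H).rTensor H

/-- `h ▷ (k ⊗ l) = h₁ k S(h₂) ⊗ l`. -/
def lactB : H ⊗[K] (H ⊗[K] H) →ₗ[K] H ⊗[K] H :=
  (ad K H).rTensor H ∘ₗ (TensorProduct.assoc K H H H).symm.toLinearMap

/-- `(k ⊗ l) ◁ h = k ⊗ l h`. -/
def ractB : (H ⊗[K] H) ⊗[K] H →ₗ[K] H ⊗[K] H :=
  (mu K H).lTensor H ∘ₗ (TensorProduct.assoc K H H H).toLinearMap

/-- `ρˡ(k ⊗ l) = k₁ ⊗ (k₂ ⊗ l)`. -/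
def lcoactB : H ⊗[K] H →ₗ[K] H ⊗[K] (H ⊗[K] H) :=
  (TensorProduct.assoc K H H H).toLinearMap ∘ₗ (cm K H).rTensor H

/-- `l ↦ l₂ ⊗ S(l₁) l₃`. -/
def c2 : H →ₗ[K] H ⊗[K] H :=
  (mu K H).lTensor H ∘ₗ ((sa K H).rTensor H).lTensor H ∘ₗ (TensorProduct.assoc K H H H).toLinearMap
    ∘ₗ (TensorProduct.comm K H H).toLinearMap.rTensor H ∘ₗ (cm K H).rTensor H ∘ₗ cm K H

/-- `ρʳ(k ⊗ l) = (k ⊗ l₂) ⊗ S(l₁) l₃`. -/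
def rcoactB : H ⊗[K] H →ₗ[K] (H ⊗[K] H) ⊗[K] H :=
  (TensorProduct.assoc K H H H).symm.toLinearMap ∘ₗ (c2 K H).lTensor H

/-- The `u`-map `m ↦ m₍₋₁₎ ▷ (m₍₀₎₍₀₎ ◁ m₍₀₎₍₁₎)`; the `u`-condition says it is the identity. -/
def uMap {M : Type} [AddCommGroup M] [Module K M]
    (lact : H ⊗[K] M →ₗ[K] M) (ract : M ⊗[K] H →ₗ[K] M)
    (lcoact : M →ₗ[K] H ⊗[K] M) (rcoact : M →ₗ[K] M ⊗[K] H) : M →ₗ[K] M :=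
  lact ∘ₗ ract.lTensor H ∘ₗ rcoact.lTensor H ∘ₗ lcoact

/-! Quasitriangular structures. -/

/-- `a ⊗ b ↦ (a ⊗ 1) ⊗ b`. -/
def i13 : H ⊗[K] H →ₗ[K] (H ⊗[K] H) ⊗[K] H :=
  (Algebra.TensorProduct.includeLeft (R := K) (A := H) (B := H) (S := K)).toLinearMap.rTensor H

/-- `a ⊗ b ↦ (1 ⊗ a) ⊗ b`. -/
def i23 : H ⊗[K] H →ₗ[K] (H ⊗[K] H) ⊗[K] H :=
  (Algebra.TensorProduct.includeRight (R := K) (A := H) (B := H)).toLinearMap.rTensor H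

/-- `a ⊗ b ↦ a ⊗ (1 ⊗ b)`. -/
def j13 : H ⊗[K] H →ₗ[K] H ⊗[K] (H ⊗[K] H) :=
  (Algebra.TensorProduct.includeRight (R := K) (A := H) (B := H)).toLinearMap.lTensor H

/-- `a ⊗ b ↦ a ⊗ (b ⊗ 1)`. -/
def j12 : H ⊗[K] H →ₗ[K] H ⊗[K] (H ⊗[K] H) :=
  (Algebra.TensorProduct.includeLeft (R := K) (A := H) (B := H) (S := K)).toLinearMap.lTensor H

/-- Quasitriangular Hopf algebra (Definition 2.2, (QT1)–(QT4)). -/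
structure IsQT (R : H ⊗[K] H) : Prop where
  unit : IsUnit R
  qt1 : (cm K H).rTensor H R = i13 K H R * i23 K H R
  qt2 : (cm K H).lTensor H R = j13 K H R * j12 K H R
  qt3 : ∀ h : H, (TensorProduct.comm K H H) (cm K H h) * R = R * cm K H h
  qt4l : (TensorProduct.lid K H) ((cu K H).rTensor H R) = 1
  qt4r : (TensorProduct.rid K H) ((cu K H).lTensor H R) = 1

/-- Triangular Hopf algebra: quasitriangular with `R⁻¹ = τ(R)`. -/
structure IsTriangular (R : H ⊗[K] H) extends IsQT K H R : Prop where
  tri : R * (TensorProduct.comm K H H) R = 1 ∧ (TensorProduct.comm K H H) R * R = 1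

/-- `ρˡ(m) = R² ⊗ R¹ ▷ m`. -/
def lcoactR {M : Type} [AddCommGroup M] [Module K M]
    (lact : H ⊗[K] M →ₗ[K] M) (R : H ⊗[K] H) : M →ₗ[K] H ⊗[K] M :=
  lact.lTensor H ∘ₗ (TensorProduct.assoc K H H M).toLinearMap
    ∘ₗ TensorProduct.mk K (H ⊗[K] H) M ((TensorProduct.comm K H H) R)

/-- `ρʳ(m) = m ◁ R¹ ⊗ R²`. -/
def rcoactR {M : Type} [AddCommGroup M] [Module K M]
    (ract : M ⊗[K] H →ₗ[K] M) (R : H ⊗[K] H) : M →ₗ[K] M ⊗[K] H :=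
  ract.rTensor H ∘ₗ (TensorProduct.assoc K M H H).symm.toLinearMap
    ∘ₗ (TensorProduct.mk K M (H ⊗[K] H)).flip R

/-! Coquasitriangular structures. -/

/-- The comultiplication of the tensor-product coalgebra `H ⊗ H`. -/
def cm2 : H ⊗[K] H →ₗ[K] (H ⊗[K] H) ⊗[K] (H ⊗[K] H) :=
  (tensorTensorTensorComm K H H H H).toLinearMap ∘ₗ TensorProduct.map (cm K H) (cm K H)

/-- Convolution product on linear forms on `H ⊗ H`. -/
def conv (f g : H ⊗[K] H →ₗ[K] K) : H ⊗[K] H →ₗ[K] K :=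
  LinearMap.mul' K K ∘ₗ TensorProduct.map f g ∘ₗ cm2 K H

/-- `g ⊗ h ↦ ε(g) ε(h)`, the convolution unit. -/
def epsBoth : H ⊗[K] H →ₗ[K] K :=
  LinearMap.mul' K K ∘ₗ TensorProduct.map (cu K H) (cu K H)

/-- Coquasitriangular Hopf algebra (Definition 2.3, (CQT1)–(CQT4)). -/
structure IsCQT (z : H ⊗[K] H →ₗ[K] K) : Prop where
  inv : ∃ z' : H ⊗[K] H →ₗ[K] K, conv K H z z' = epsBoth K H ∧ conv K H z' z = epsBoth K H
  cqt1 : z ∘ₗ (mu K H).lTensor H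
      = LinearMap.mul' K K ∘ₗ TensorProduct.map z z
        ∘ₗ (tensorTensorTensorComm K H H H H).toLinearMap ∘ₗ (cm K H).rTensor (H ⊗[K] H)
  cqt2 : z ∘ₗ (mu K H).rTensor H
      = LinearMap.mul' K K ∘ₗ TensorProduct.map z z
        ∘ₗ (tensorTensorTensorComm K H H H H).toLinearMap
        ∘ₗ (TensorProduct.comm K H H).toLinearMap.lTensor (H ⊗[K] H)
        ∘ₗ (cm K H).lTensor (H ⊗[K] H)
  cqt3 : (TensorProduct.lid K H).toLinearMap
        ∘ₗ TensorProduct.map z (mu K H ∘ₗ (TensorProduct.comm K H H).toLinearMap) ∘ₗ cm2 K H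
      = (TensorProduct.rid K H).toLinearMap ∘ₗ TensorProduct.map (mu K H) z ∘ₗ cm2 K H
  cqt4 : ∀ h : H, z (h ⊗ₜ 1) = cu K H h ∧ z ((1 : H) ⊗ₜ h) = cu K H h

/-- Cotriangular Hopf algebra: coquasitriangular with
`ζ(h₁,g₁) ζ(g₂,h₂) = ε(h) ε(g)`. -/
structure IsCotriangular (z : H ⊗[K] H →ₗ[K] K) extends IsCQT K H z : Prop where
  cot : conv K H z (z ∘ₗ (TensorProduct.comm K H H).toLinearMap) = epsBoth K H

/-- `h ▷ m = ζ(h, m₍₋₁₎) m₍₀₎`. -/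
def lactZ {M : Type} [AddCommGroup M] [Module K M]
    (lcoact : M →ₗ[K] H ⊗[K] M) (z : H ⊗[K] H →ₗ[K] K) : H ⊗[K] M →ₗ[K] M :=
  (TensorProduct.lid K M).toLinearMap ∘ₗ z.rTensor M
    ∘ₗ (TensorProduct.assoc K H H M).symm.toLinearMap ∘ₗ lcoact.lTensor H

/-- `m ◁ h = m₍₀₎ ζ(h, m₍₁₎)`. -/
def ractZ {M : Type} [AddCommGroup M] [Module K M]
    (rcoact : M →ₗ[K] M ⊗[K] H) (z : H ⊗[K] H →ₗ[K] K) : M ⊗[K] H →ₗ[K] M :=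
  (TensorProduct.rid K M).toLinearMap ∘ₗ z.lTensor M
    ∘ₗ (TensorProduct.comm K H H).toLinearMap.lTensor M
    ∘ₗ (TensorProduct.assoc K M H H).toLinearMap ∘ₗ rcoact.rTensor H

end YDL

namespace YDLAux
open YDL TensorProduct Coalgebra

variable {K : Type} [Field K] {H : Type} [Ring H] [HopfAlgebra K H]

lemma sum_counit_smul {a : H} {ι : Type*} (r : Coalgebra.Repr K a ι) :
    ∑ i ∈ r.index, YDL.cu K H (r.left i) • r.right i = a := by
  have h := congrArg (TensorProduct.lid K H) (Coalgebra.sum_counit_tmul_eq r)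
  simp only [map_sum, TensorProduct.lid_tmul, one_smul] at h
  exact h

lemma sum_smul_counit {a : H} {ι : Type*} (r : Coalgebra.Repr K a ι) :
    ∑ i ∈ r.index, YDL.cu K H (r.right i) • r.left i = a := by
  have h := congrArg (TensorProduct.rid K H) (Coalgebra.sum_tmul_counit_eq r)
  simp only [map_sum, TensorProduct.rid_tmul, one_smul] at h
  exact h

lemma sum_counit_mul_counit {a : H} {ι : Type*} (r : Coalgebra.Repr K a ι) :
    ∑ i ∈ r.index, YDL.cu K H (r.left i) * YDL.cu K H (r.right i) = YDL.cu K H a := by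
  have h := congrArg (YDL.cu K H) (sum_counit_smul r)
  simp only [map_sum, map_smul, smul_eq_mul] at h
  exact h

lemma counit_antipode (a : H) : YDL.cu K H (YDL.sa K H a) = YDL.cu K H a := by
  have h := congrArg (YDL.cu K H) (HopfAlgebra.sum_antipode_mul_eq_smul (R := K) (ℛ K a))
  rw [map_sum, map_smul] at h
  simp only [Bialgebra.counit_mul, Bialgebra.counit_one, smul_eq_mul, mul_one] at h
  calc YDL.cu K H (YDL.sa K H a)
      = YDL.cu K H (YDL.sa K H (∑ i ∈ (ℛ K a).index,
          YDL.cu K H ((ℛ K a).right i) • (ℛ K a).left i)) := by rw [sum_smul_counit]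
    _ = ∑ i ∈ (ℛ K a).index,
          YDL.cu K H (YDL.sa K H ((ℛ K a).left i)) * YDL.cu K H ((ℛ K a).right i) := by
        rw [map_sum, map_sum]
        exact Finset.sum_congr rfl fun i _ => by rw [map_smul, map_smul, smul_eq_mul, mul_comm]
    _ = YDL.cu K H a := h

/-- An explicit Sweedler representation of `1`. -/
def oneRepr (K : Type) [Field K] (H : Type) [Ring H] [HopfAlgebra K H] :
    Coalgebra.Repr K (1 : H) ℕ :=
  ⟨{0}, fun _ : ℕ => 1, fun _ => 1, by simp [Algebra.TensorProduct.one_def]⟩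

lemma antipode_one : YDL.sa K H 1 = 1 := by
  have h := HopfAlgebra.sum_antipode_mul_eq_smul (R := K) (oneRepr K H)
  simp only [oneRepr, Finset.sum_singleton, mul_one, Bialgebra.counit_one, one_smul] at h
  exact h

lemma ad_repr {a : H} (g : H) {ι : Type*} (r : Coalgebra.Repr K a ι) :
    YDL.ad K H (a ⊗ₜ g) = ∑ i ∈ r.index, r.left i * (g * YDL.sa K H (r.right i)) := by
  unfold YDL.ad
  simp only [LinearMap.comp_apply, LinearMap.rTensor_tmul]
  rw [show (YDL.cm K H) a = ∑ i ∈ r.index, r.left i ⊗ₜ[K] r.right i from r.eq.symm]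
  simp [TensorProduct.sum_tmul, map_sum]

lemma adR_repr (b : H) {d : H} {ι : Type*} (r : Coalgebra.Repr K d ι) :
    YDL.adR K H (b ⊗ₜ d) = ∑ i ∈ r.index, YDL.sa K H (r.left i) * b * r.right i := by
  unfold YDL.adR
  simp only [LinearMap.comp_apply, LinearMap.lTensor_tmul]
  rw [show (YDL.cm K H) d = ∑ i ∈ r.index, r.left i ⊗ₜ[K] r.right i from r.eq.symm]
  simp [TensorProduct.tmul_sum, map_sum]

lemma braid_tmul (k l g h : H) {ι κ : Type*} (rk : Coalgebra.Repr K k ι) (rh : Coalgebra.Repr K h κ) :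
    YDL.braid K H (YDL.lcoactB K H) (YDL.ractA K H) (YDL.lactB K H) (YDL.rcoactA K H)
        ((k ⊗ₜ l) ⊗ₜ (g ⊗ₜ h))
      = ∑ i ∈ rk.index, ∑ j ∈ rh.index,
          (YDL.ad K H (rk.left i ⊗ₜ g) ⊗ₜ rh.left j) ⊗ₜ
            (rk.right i ⊗ₜ YDL.adR K H (l ⊗ₜ rh.right j)) := by
  unfold YDL.braid YDL.lcoactB YDL.rcoactA YDL.lactB YDL.ractA
  simp only [LinearMap.comp_apply, TensorProduct.map_tmul, LinearMap.rTensor_tmul,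
    LinearMap.lTensor_tmul]
  rw [show (YDL.cm K H) k = ∑ i ∈ rk.index, rk.left i ⊗ₜ[K] rk.right i from rk.eq.symm,
    show (YDL.cm K H) h = ∑ j ∈ rh.index, rh.left j ⊗ₜ[K] rh.right j from rh.eq.symm]
  simp only [map_sum, TensorProduct.sum_tmul, TensorProduct.tmul_sum,
    TensorProduct.assoc_tmul, TensorProduct.assoc_symm_tmul, TensorProduct.map_tmul,
    LinearMap.rTensor_tmul, LinearMap.lTensor_tmul,
    TensorProduct.tensorTensorTensorComm_tmul, LinearMap.coe_comp, Function.comp_apply,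
    LinearEquiv.coe_coe]
  exact Finset.sum_comm

lemma counit_ad (a c : H) :
    YDL.cu K H (YDL.ad K H (a ⊗ₜ c)) = YDL.cu K H a * YDL.cu K H c := by
  rw [ad_repr c (ℛ K a), map_sum]
  calc ∑ i ∈ (ℛ K a).index,
        YDL.cu K H ((ℛ K a).left i * (c * YDL.sa K H ((ℛ K a).right i)))
      = (∑ i ∈ (ℛ K a).index,
          YDL.cu K H ((ℛ K a).left i) * YDL.cu K H ((ℛ K a).right i)) * YDL.cu K H c := by
        rw [Finset.sum_mul]
        exact Finset.sum_congr rfl fun i _ => by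
          rw [Bialgebra.counit_mul, Bialgebra.counit_mul, counit_antipode]; ring
    _ = YDL.cu K H a * YDL.cu K H c := by rw [sum_counit_mul_counit]

lemma counit_adR (b d : H) :
    YDL.cu K H (YDL.adR K H (b ⊗ₜ d)) = YDL.cu K H b * YDL.cu K H d := by
  rw [adR_repr b (ℛ K d), map_sum]
  calc ∑ i ∈ (ℛ K d).index,
        YDL.cu K H (YDL.sa K H ((ℛ K d).left i) * b * (ℛ K d).right i)
      = YDL.cu K H b * ∑ i ∈ (ℛ K d).index,
          YDL.cu K H ((ℛ K d).left i) * YDL.cu K H ((ℛ K d).right i) := by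
        rw [Finset.mul_sum]
        exact Finset.sum_congr rfl fun i _ => by
          rw [Bialgebra.counit_mul, Bialgebra.counit_mul, counit_antipode]; ring
    _ = YDL.cu K H b * YDL.cu K H d := by rw [sum_counit_mul_counit]

/-- `(a ⊗ b) ⊗ (c ⊗ d) ↦ (ε a ε b ε d) • c`. -/
def Q3 (K : Type) [Field K] (H : Type) [Ring H] [HopfAlgebra K H] :
    (H ⊗[K] H) ⊗[K] (H ⊗[K] H) →ₗ[K] H :=
  (TensorProduct.lid K H).toLinearMap ∘ₗ
    TensorProduct.map (YDL.epsBoth K H)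
      ((TensorProduct.rid K H).toLinearMap ∘ₗ (YDL.cu K H).lTensor H)

lemma Q3_tmul (a b c d : H) :
    Q3 K H ((a ⊗ₜ b) ⊗ₜ (c ⊗ₜ d))
      = (YDL.cu K H a * YDL.cu K H b * YDL.cu K H d) • c := by
  unfold Q3 YDL.epsBoth
  simp only [LinearMap.comp_apply, TensorProduct.map_tmul, LinearMap.lTensor_tmul,
    LinearEquiv.coe_coe, TensorProduct.rid_tmul, TensorProduct.lid_tmul,
    LinearMap.mul'_apply, TensorProduct.tmul_smul, map_smul, smul_eq_mul]
  rw [smul_smul]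
  congr 1
  ring

lemma Q3_braid (a b c d : H) :
    Q3 K H (YDL.braid K H (YDL.lcoactB K H) (YDL.ractA K H) (YDL.lactB K H) (YDL.rcoactA K H)
        ((a ⊗ₜ b) ⊗ₜ (c ⊗ₜ d)))
      = (YDL.cu K H b * YDL.cu K H c * YDL.cu K H d) • a := by
  rw [braid_tmul a b c d (ℛ K a) (ℛ K d), map_sum]
  calc ∑ i ∈ (ℛ K a).index, (Q3 K H) (∑ j ∈ (ℛ K d).index,
          (YDL.ad K H ((ℛ K a).left i ⊗ₜ c) ⊗ₜ (ℛ K d).left j) ⊗ₜ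
            ((ℛ K a).right i ⊗ₜ YDL.adR K H (b ⊗ₜ (ℛ K d).right j)))
      = ∑ i ∈ (ℛ K a).index, ∑ j ∈ (ℛ K d).index,
          ((YDL.cu K H ((ℛ K a).left i) * YDL.cu K H c)
            * (YDL.cu K H ((ℛ K d).left j) * YDL.cu K H ((ℛ K d).right j))
            * (YDL.cu K H b)) • (ℛ K a).right i := by
        refine Finset.sum_congr rfl fun i _ => ?_
        rw [map_sum]
        refine Finset.sum_congr rfl fun j _ => ?_
        rw [Q3_tmul, counit_ad, counit_adR]
        congr 1
        ring
    _ = ∑ i ∈ (ℛ K a).index,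
          ((YDL.cu K H ((ℛ K a).left i) * YDL.cu K H c) * YDL.cu K H d * YDL.cu K H b)
            • (ℛ K a).right i := by
        refine Finset.sum_congr rfl fun i _ => ?_
        rw [← Finset.sum_smul, ← Finset.sum_mul, ← Finset.mul_sum, sum_counit_mul_counit]
    _ = (YDL.cu K H b * YDL.cu K H c * YDL.cu K H d)
          • ∑ i ∈ (ℛ K a).index, YDL.cu K H ((ℛ K a).left i) • (ℛ K a).right i := by
        rw [Finset.smul_sum]
        refine Finset.sum_congr rfl fun i _ => ?_
        rw [smul_smul]
        congr 1
        ring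
    _ = (YDL.cu K H b * YDL.cu K H c * YDL.cu K H d) • a := by rw [sum_counit_smul]

lemma ad_of_comm (hc : ∀ x y : H, x * y = y * x) (a c : H) :
    YDL.ad K H (a ⊗ₜ c) = YDL.cu K H a • c := by
  rw [ad_repr c (ℛ K a)]
  calc ∑ i ∈ (ℛ K a).index,
        (ℛ K a).left i * (c * YDL.sa K H ((ℛ K a).right i))
      = c * ∑ i ∈ (ℛ K a).index,
          (ℛ K a).left i * YDL.sa K H ((ℛ K a).right i) := by
        rw [Finset.mul_sum]
        refine Finset.sum_congr rfl fun i _ => ?_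
        rw [← mul_assoc, hc ((ℛ K a).left i) c, mul_assoc]
    _ = c * (YDL.cu K H a • 1) := by
        rw [HopfAlgebra.sum_mul_antipode_eq_smul (R := K) (ℛ K a)]
    _ = YDL.cu K H a • c := by rw [mul_smul_comm, mul_one]

lemma adR_of_comm (hc : ∀ x y : H, x * y = y * x) (b d : H) :
    YDL.adR K H (b ⊗ₜ d) = YDL.cu K H d • b := by
  rw [adR_repr b (ℛ K d)]
  calc ∑ i ∈ (ℛ K d).index,
        YDL.sa K H ((ℛ K d).left i) * b * (ℛ K d).right i
      = b * ∑ i ∈ (ℛ K d).index,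
          YDL.sa K H ((ℛ K d).left i) * (ℛ K d).right i := by
        rw [Finset.mul_sum]
        refine Finset.sum_congr rfl fun i _ => ?_
        rw [hc (YDL.sa K H ((ℛ K d).left i)) b, mul_assoc]
    _ = b * (YDL.cu K H d • 1) := by
        rw [HopfAlgebra.sum_antipode_mul_eq_smul (R := K) (ℛ K d)]
    _ = YDL.cu K H d • b := by rw [mul_smul_comm, mul_one]

lemma braid_of_comm (hc : ∀ x y : H, x * y = y * x) (k l g h : H) :
    YDL.braid K H (YDL.lcoactB K H) (YDL.ractA K H) (YDL.lactB K H) (YDL.rcoactA K H)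
        ((k ⊗ₜ l) ⊗ₜ (g ⊗ₜ h)) = (g ⊗ₜ h) ⊗ₜ (k ⊗ₜ l) := by
  rw [braid_tmul k l g h (ℛ K k) (ℛ K h)]
  calc ∑ i ∈ (ℛ K k).index, ∑ j ∈ (ℛ K h).index,
          (YDL.ad K H ((ℛ K k).left i ⊗ₜ g) ⊗ₜ (ℛ K h).left j) ⊗ₜ
            ((ℛ K k).right i ⊗ₜ YDL.adR K H (l ⊗ₜ (ℛ K h).right j))
      = ∑ i ∈ (ℛ K k).index, ∑ j ∈ (ℛ K h).index,
          (g ⊗ₜ (YDL.cu K H ((ℛ K h).right j) • (ℛ K h).left j)) ⊗ₜ[K]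
            ((YDL.cu K H ((ℛ K k).left i) • (ℛ K k).right i) ⊗ₜ l) := by
        refine Finset.sum_congr rfl fun i _ => Finset.sum_congr rfl fun j _ => ?_
        rw [ad_of_comm hc, adR_of_comm hc]
        simp only [TensorProduct.tmul_smul, ← TensorProduct.smul_tmul', smul_smul]
        congr 1
        ring
    _ = (g ⊗ₜ h) ⊗ₜ (k ⊗ₜ l) := by
        rw [← Finset.sum_comm]
        rw [show ∑ j ∈ (ℛ K h).index, ∑ i ∈ (ℛ K k).index,
            (g ⊗ₜ (YDL.cu K H ((ℛ K h).right j) • (ℛ K h).left j)) ⊗ₜ[K]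
              ((YDL.cu K H ((ℛ K k).left i) • (ℛ K k).right i) ⊗ₜ l)
          = ∑ j ∈ (ℛ K h).index,
            (g ⊗ₜ (YDL.cu K H ((ℛ K h).right j) • (ℛ K h).left j)) ⊗ₜ[K]
              ((∑ i ∈ (ℛ K k).index, YDL.cu K H ((ℛ K k).left i) • (ℛ K k).right i) ⊗ₜ l)
          from Finset.sum_congr rfl fun j _ => by
            rw [← TensorProduct.tmul_sum, ← TensorProduct.sum_tmul]]
        rw [sum_counit_smul, ← TensorProduct.sum_tmul, ← TensorProduct.tmul_sum,
          sum_smul_counit]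

lemma adR_one_one : YDL.adR K H ((1 : H) ⊗ₜ (1 : H)) = 1 := by
  rw [adR_repr (1 : H) (oneRepr K H)]
  simp [oneRepr, antipode_one]

end YDLAux

open Coalgebra in
/-- the braiding `ψ_{H₄,H₄}` is a symmetry iff `H` is
commutative. -/
theorem statement19 (K : Type) [Field K] (H : Type) [Ring H] [HopfAlgebra K H]
    (hS : Function.Bijective (YDL.sa K H)) :
    YDL.braid K H (YDL.lcoactB K H) (YDL.ractA K H) (YDL.lactB K H) (YDL.rcoactA K H)
        ∘ₗ YDL.braid K H (YDL.lcoactB K H) (YDL.ractA K H) (YDL.lactB K H) (YDL.rcoactA K H)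
      = LinearMap.id
    ↔ ∀ g h : H, g * h = h * g := by
  constructor
  · intro hpsi
    have had : ∀ k g : H, YDL.ad K H (k ⊗ₜ g) = YDL.cu K H k • g := by
      intro k g
      have hx := LinearMap.congr_fun hpsi ((k ⊗ₜ (1 : H)) ⊗ₜ (g ⊗ₜ (1 : H)))
      rw [LinearMap.comp_apply, LinearMap.id_apply,
        YDLAux.braid_tmul k 1 g 1 (ℛ K k) (YDLAux.oneRepr K H)] at hx
      simp only [YDLAux.oneRepr, Finset.sum_singleton, YDLAux.adR_one_one] at hx
      have hq := congrArg (YDLAux.Q3 K H) hx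
      simp only [map_sum, YDLAux.Q3_braid, YDLAux.Q3_tmul, Bialgebra.counit_one, one_mul,
        mul_one] at hq
      conv_lhs => rw [show k = ∑ i ∈ (ℛ K k).index,
          YDL.cu K H ((ℛ K k).right i) • (ℛ K k).left i from (YDLAux.sum_smul_counit _).symm]
      simp only [TensorProduct.sum_tmul, ← TensorProduct.smul_tmul', map_sum, map_smul] at hq ⊢
      exact hq
    intro g k
    set T : H ⊗[K] (H ⊗[K] H) →ₗ[K] H :=
      YDL.mu K H ∘ₗ
        (LinearMap.mulLeft K g ∘ₗ YDL.mu K H ∘ₗ (YDL.sa K H).rTensor H).lTensor H with hT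
    have hTapp : ∀ x y z : H, T (x ⊗ₜ (y ⊗ₜ z)) = x * (g * (YDL.sa K H y * z)) := by
      intro x y z
      simp [hT, LinearMap.mul'_apply]
    have hco := Coalgebra.sum_tmul_tmul_eq (ℛ K k)
      (fun i => ℛ K ((ℛ K k).left i)) (fun i => ℛ K ((ℛ K k).right i))
    have hc2 := congrArg T hco
    rw [map_sum, map_sum] at hc2
    have hL : ∑ i ∈ (ℛ K k).index, T (∑ j ∈ (ℛ K ((ℛ K k).left i)).index,
          (ℛ K ((ℛ K k).left i)).left j ⊗ₜ[K] ((ℛ K ((ℛ K k).left i)).right j ⊗ₜ[K]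
            (ℛ K k).right i)) = g * k := by
      calc ∑ i ∈ (ℛ K k).index, T (∑ j ∈ (ℛ K ((ℛ K k).left i)).index,
            (ℛ K ((ℛ K k).left i)).left j ⊗ₜ[K] ((ℛ K ((ℛ K k).left i)).right j ⊗ₜ[K]
              (ℛ K k).right i))
          = ∑ i ∈ (ℛ K k).index, YDL.ad K H ((ℛ K k).left i ⊗ₜ g) * (ℛ K k).right i := by
            refine Finset.sum_congr rfl fun i _ => ?_
            rw [map_sum, YDLAux.ad_repr g (ℛ K ((ℛ K k).left i)), Finset.sum_mul]
            refine Finset.sum_congr rfl fun j _ => ?_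
            rw [hTapp, ← mul_assoc g, ← mul_assoc]
        _ = g * k := by
            rw [show (∑ i ∈ (ℛ K k).index,
                YDL.ad K H ((ℛ K k).left i ⊗ₜ g) * (ℛ K k).right i)
              = ∑ i ∈ (ℛ K k).index,
                YDL.cu K H ((ℛ K k).left i) • (g * (ℛ K k).right i)
              from Finset.sum_congr rfl fun i _ => by rw [had, smul_mul_assoc]]
            rw [show (∑ i ∈ (ℛ K k).index,
                YDL.cu K H ((ℛ K k).left i) • (g * (ℛ K k).right i))
              = ∑ i ∈ (ℛ K k).index, g * (YDL.cu K H ((ℛ K k).left i) • (ℛ K k).right i)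
              from Finset.sum_congr rfl fun i _ => (mul_smul_comm _ _ _).symm]
            rw [← Finset.mul_sum, YDLAux.sum_counit_smul]
    have hR : ∑ i ∈ (ℛ K k).index, T (∑ j ∈ (ℛ K ((ℛ K k).right i)).index,
          (ℛ K k).left i ⊗ₜ[K] ((ℛ K ((ℛ K k).right i)).left j ⊗ₜ[K]
            (ℛ K ((ℛ K k).right i)).right j)) = k * g := by
      calc ∑ i ∈ (ℛ K k).index, T (∑ j ∈ (ℛ K ((ℛ K k).right i)).index,
            (ℛ K k).left i ⊗ₜ[K] ((ℛ K ((ℛ K k).right i)).left j ⊗ₜ[K]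
              (ℛ K ((ℛ K k).right i)).right j))
          = ∑ i ∈ (ℛ K k).index,
              YDL.cu K H ((ℛ K k).right i) • ((ℛ K k).left i * g) := by
            refine Finset.sum_congr rfl fun i _ => ?_
            rw [map_sum]
            rw [show ∑ j ∈ (ℛ K ((ℛ K k).right i)).index,
                T ((ℛ K k).left i ⊗ₜ[K] ((ℛ K ((ℛ K k).right i)).left j ⊗ₜ[K]
                  (ℛ K ((ℛ K k).right i)).right j))
              = ∑ j ∈ (ℛ K ((ℛ K k).right i)).index,
                (ℛ K k).left i * (g * (YDL.sa K H ((ℛ K ((ℛ K k).right i)).left j) *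
                  (ℛ K ((ℛ K k).right i)).right j))
              from Finset.sum_congr rfl fun j _ => hTapp _ _ _]
            rw [← Finset.mul_sum, ← Finset.mul_sum,
              HopfAlgebra.sum_antipode_mul_eq_smul (R := K) (ℛ K ((ℛ K k).right i)),
              mul_smul_comm, mul_one, mul_smul_comm]
        _ = k * g := by
            rw [show (∑ i ∈ (ℛ K k).index,
                YDL.cu K H ((ℛ K k).right i) • ((ℛ K k).left i * g))
              = ∑ i ∈ (ℛ K k).index,
                (YDL.cu K H ((ℛ K k).right i) • (ℛ K k).left i) * g
              from Finset.sum_congr rfl fun i _ => (smul_mul_assoc _ _ _).symm]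
            rw [← Finset.sum_mul, YDLAux.sum_smul_counit]
    rw [hL, hR] at hc2
    exact hc2
  · intro hc
    apply TensorProduct.ext'
    intro x y
    induction x with
    | zero => simp
    | tmul k l =>
      induction y with
      | zero => simp
      | tmul g h =>
        simp only [LinearMap.comp_apply, LinearMap.id_apply]
        rw [YDLAux.braid_of_comm hc, YDLAux.braid_of_comm hc]
      | add y1 y2 ih1 ih2 =>
        simp only [TensorProduct.tmul_add, map_add, ih1, ih2]
    | add x1 x2 ih1 ih2 =>
      simp only [TensorProduct.add_tmul, map_add, ih1, ih2]
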